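/- arXiv:1510.02730 — 2 statements merged into one kernel-verified Lean document; each statement's English description precedes it below -/
import Mathlib

section
/- Lower bound for the second-level functional φ: for any L-periodic mean-zero H² function w with |w|_{L²} ≤ R₀ and |w'|_{L²} ≤ R₁, one has |w''|² ≤ φ(w) + (45/64) R₀³ R₁, where φ(w) = ∫ ((9/5)w''² − 3 w w'² + w⁴/4). -/
open Real intervalIntegral MeasureTheory

private lemma my_cs (a b : ℝ) (hab : a ≤ b) (f g : ℝ → ℝ) (hf : Continuous f)
    (hg : Continuous g) :
    (∫ x in a..b, f x * g x)
      ≤ Real.sqrt (∫ x in a..b, f x ^ 2) * Real.sqrt (∫ x in a..b, g x ^ 2) := by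
  set A := ∫ x in a..b, f x ^ 2 with hA_def
  set C := ∫ x in a..b, g x ^ 2 with hC_def
  set B := ∫ x in a..b, f x * g x with hB_def
  have hA : 0 ≤ A := intervalIntegral.integral_nonneg hab (fun x _ => sq_nonneg _)
  have hC : 0 ≤ C := intervalIntegral.integral_nonneg hab (fun x _ => sq_nonneg _)
  have key : ∀ t : ℝ, 0 ≤ t ^ 2 * A - 2 * t * B + C := by
    intro t
    have h0 : 0 ≤ ∫ x in a..b, (t * f x - g x) ^ 2 :=
      intervalIntegral.integral_nonneg hab (fun x _ => sq_nonneg _)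
    have heq : (∫ x in a..b, (t * f x - g x) ^ 2) = t ^ 2 * A - 2 * t * B + C := by
      have e : ∀ x, (t * f x - g x) ^ 2
          = t ^ 2 * f x ^ 2 - 2 * t * (f x * g x) + g x ^ 2 := by intro x; ring
      simp_rw [e]
      rw [intervalIntegral.integral_add, intervalIntegral.integral_sub,
        intervalIntegral.integral_const_mul, intervalIntegral.integral_const_mul]
      · exact ((continuous_const.mul (hf.pow 2))).intervalIntegrable a b
      · exact ((continuous_const.mul (hf.mul hg))).intervalIntegrable a b
      · exact (((continuous_const.mul (hf.pow 2))).sub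
          ((continuous_const.mul (hf.mul hg)))).intervalIntegrable a b
      · exact (hg.pow 2).intervalIntegrable a b
    linarith [heq ▸ h0]
  rcases eq_or_lt_of_le hA with hA0 | hA0
  · have hB : B ≤ 0 := by
      by_contra h
      push_neg at h
      have k := key ((C + 1) / (2 * B))
      rw [← hA0] at k
      have e : 2 * ((C + 1) / (2 * B)) * B = C + 1 := by field_simp
      nlinarith
    exact hB.trans (mul_nonneg (Real.sqrt_nonneg _) (Real.sqrt_nonneg _))
  · have k := key (B / A)
    have hBC : B ^ 2 ≤ A * C := by
      have e : (B / A) ^ 2 * A - 2 * (B / A) * B + C = C - B ^ 2 / A := by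
        field_simp; ring
      rw [e] at k
      have h2 : B ^ 2 / A ≤ C := by linarith
      have := (div_le_iff₀ hA0).mp h2
      nlinarith
    calc B ≤ |B| := le_abs_self _
      _ = Real.sqrt (B ^ 2) := (Real.sqrt_sq_eq_abs B).symm
      _ ≤ Real.sqrt (A * C) := Real.sqrt_le_sqrt hBC
      _ = Real.sqrt A * Real.sqrt C := Real.sqrt_mul hA _

private lemma my_exists_zero (L : ℝ) (hL : 0 < L) (f : ℝ → ℝ) (hf : Continuous f)
    (hmean : ∫ x in (0:ℝ)..L, f x = 0) : ∃ x₀ ∈ Set.Icc (0:ℝ) L, f x₀ = 0 := by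
  by_contra hne
  push_neg at hne
  have h0 : f 0 ≠ 0 := hne 0 ⟨le_refl 0, hL.le⟩
  rcases h0.lt_or_gt with hneg | hpos
  · have hall : ∀ x ∈ Set.Ioo (0:ℝ) L, 0 < -f x := by
      intro x hx
      rcases (hne x ⟨hx.1.le, hx.2.le⟩).lt_or_gt with h | h
      · linarith
      · exfalso
        have hmem : (0:ℝ) ∈ Set.Icc (f 0) (f x) := ⟨hneg.le, h.le⟩
        obtain ⟨y, hy, hyy⟩ := intermediate_value_Icc hx.1.le hf.continuousOn hmem
        exact hne y ⟨hy.1, hy.2.trans hx.2.le⟩ hyy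
    have hpos' := intervalIntegral_pos_of_pos_on (f := fun x => -f x) (hf.neg.intervalIntegrable 0 L) hall hL
    rw [intervalIntegral.integral_neg, hmean] at hpos'
    norm_num at hpos'
  · have hall : ∀ x ∈ Set.Ioo (0:ℝ) L, 0 < f x := by
      intro x hx
      rcases (hne x ⟨hx.1.le, hx.2.le⟩).lt_or_gt with h | h
      · exfalso
        have hmem : (0:ℝ) ∈ Set.Icc (f x) (f 0) := ⟨h.le, hpos.le⟩
        obtain ⟨y, hy, hyy⟩ := intermediate_value_Icc' hx.1.le hf.continuousOn hmem
        exact hne y ⟨hy.1, hy.2.trans hx.2.le⟩ hyy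
      · exact h
    have hpos' := intervalIntegral_pos_of_pos_on (hf.intervalIntegrable 0 L) hall hL
    rw [hmean] at hpos'
    norm_num at hpos'

private lemma my_agmon_piece (c d : ℝ) (f : ℝ → ℝ)
    (hdf : ∀ x : ℝ, HasDerivAt f (deriv f x) x) (hf : Continuous f)
    (hf' : Continuous (deriv f)) (hc : f c = 0) (hd : f d = 0)
    (x : ℝ) (hx : x ∈ Set.Icc c d) :
    f x ^ 2 ≤ ∫ t in c..d, |f t * deriv f t| := by
  have hcont : Continuous (fun t => 2 * f t * deriv f t) :=
    (continuous_const.mul hf).mul hf'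
  have hint : ∀ u v : ℝ, IntervalIntegrable (fun t => 2 * f t * deriv f t) volume u v :=
    fun u v => hcont.intervalIntegrable u v
  have hainta : ∀ u v : ℝ, IntervalIntegrable (fun t => |2 * f t * deriv f t|) volume u v :=
    fun u v => hcont.abs.intervalIntegrable u v
  have ftc : ∀ u v : ℝ, (∫ t in u..v, 2 * f t * deriv f t) = f v ^ 2 - f u ^ 2 := by
    intro u v
    apply intervalIntegral.integral_eq_sub_of_hasDerivAt
    · intro t _
      have h : HasDerivAt (fun t => f t ^ 2) _ t := (hdf t).pow 2
      exact h.congr_deriv (by push_cast; ring)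
    · exact hint u v
  have h1 : f x ^ 2 ≤ ∫ t in c..x, |2 * f t * deriv f t| := by
    calc f x ^ 2 = ∫ t in c..x, 2 * f t * deriv f t := by rw [ftc c x, hc]; ring
      _ ≤ _ := intervalIntegral.integral_mono_on hx.1 (hint c x) (hainta c x)
          (fun t _ => le_abs_self _)
  have h2 : f x ^ 2 ≤ ∫ t in x..d, |2 * f t * deriv f t| := by
    have e : f x ^ 2 = ∫ t in x..d, -(2 * f t * deriv f t) := by
      rw [intervalIntegral.integral_neg, ftc x d, hd]; ring
    rw [e]
    exact intervalIntegral.integral_mono_on hx.2 ((hint x d).neg) (hainta x d)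
      (fun t _ => neg_le_abs _)
  have hsum : (∫ t in c..x, |2 * f t * deriv f t|) + ∫ t in x..d, |2 * f t * deriv f t|
      = ∫ t in c..d, |2 * f t * deriv f t| :=
    intervalIntegral.integral_add_adjacent_intervals (hainta c x) (hainta x d)
  have habs2 : (∫ t in c..d, |2 * f t * deriv f t|) = 2 * ∫ t in c..d, |f t * deriv f t| := by
    rw [← intervalIntegral.integral_const_mul]
    congr 1
    funext t
    rw [mul_assoc, abs_mul]
    norm_num
  linarith
theorem stmt9 (L R₀ R₁ : ℝ) (hL : 0 < L) (w : ℝ → ℝ) (hw : ContDiff ℝ 2 w)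
    (hper : Function.Periodic w L) (hmean : ∫ x in (0:ℝ)..L, w x = 0)
    (hR0 : Real.sqrt (∫ x in (0:ℝ)..L, (w x) ^ 2) ≤ R₀)
    (hR1 : Real.sqrt (∫ x in (0:ℝ)..L, (deriv w x) ^ 2) ≤ R₁) :
    ∫ x in (0:ℝ)..L, (deriv^[2] w x) ^ 2
      ≤ (∫ x in (0:ℝ)..L,
           ((9/5) * (deriv^[2] w x) ^ 2 - 3 * w x * (deriv w x) ^ 2 + (w x) ^ 4 / 4))
        + (45/64) * R₀ ^ 3 * R₁ := by
  -- basic regularity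
  have h1 : Differentiable ℝ w := hw.differentiable (by norm_num)
  have h2 : ContDiff ℝ 1 (deriv w) :=
    (contDiff_succ_iff_deriv.mp (show ContDiff ℝ (1+1) w from by norm_num [hw])).2.2
  have h2' : Differentiable ℝ (deriv w) := h2.differentiable (by norm_num)
  have cw : Continuous w := h1.continuous
  have cw' : Continuous (deriv w) := h2'.continuous
  have cw'' : Continuous (deriv (deriv w)) :=
    (contDiff_succ_iff_deriv.mp (show ContDiff ℝ (0+1) (deriv w) from by norm_num [h2])).2.2.continuous
  have hdw : ∀ x : ℝ, HasDerivAt w (deriv w x) x := fun x => (h1 x).hasDerivAt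
  have hdw' : ∀ x : ℝ, HasDerivAt (deriv w) (deriv (deriv w) x) x :=
    fun x => (h2' x).hasDerivAt
  have hit2 : deriv^[2] w = deriv (deriv w) := rfl
  rw [hit2]
  -- derivative is periodic
  have hdper : Function.Periodic (deriv w) L := by
    intro x
    have e : w = fun t => w (t + L) := by funext t; exact (hper t).symm
    conv_rhs => rw [e]
    rw [deriv_comp_add_const]
  -- nonnegativity of R₀, R₁
  have hR0n : 0 ≤ R₀ := le_trans (Real.sqrt_nonneg _) hR0
  have hR1n : 0 ≤ R₁ := le_trans (Real.sqrt_nonneg _) hR1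
  -- the Agmon-type pointwise bound  w x ^ 2 ≤ R₀ * R₁  on [0, L]
  obtain ⟨x₀, hx₀, hwx₀⟩ := my_exists_zero L hL w cw hmean
  have hperabs : Function.Periodic (fun t => |w t * deriv w t|) L := by
    intro t; simp only [hper t, hdper t]
  have haint : ∀ u v : ℝ, IntervalIntegrable (fun t => |w t * deriv w t|) volume u v :=
    fun u v => (cw.mul cw').abs.intervalIntegrable u v
  have key : ∀ x ∈ Set.Icc (0:ℝ) L, w x ^ 2 ≤ ∫ t in (0:ℝ)..L, |w t * deriv w t| := by
    intro x hx
    rcases le_or_gt x₀ x with h | h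
    · have hpiece := my_agmon_piece x₀ (x₀ + L) w hdw cw cw' hwx₀ (by rw [hper x₀]; exact hwx₀) x
        ⟨h, by linarith [hx.2, hx₀.1]⟩
      calc w x ^ 2 ≤ ∫ t in x₀..(x₀ + L), |w t * deriv w t| := hpiece
        _ = ∫ t in (0:ℝ)..(0 + L), |w t * deriv w t| := hperabs.intervalIntegral_add_eq x₀ 0
        _ = ∫ t in (0:ℝ)..L, |w t * deriv w t| := by rw [zero_add]
    · have hc0 : w (x₀ - L) = 0 := by rw [hper.sub_eq x₀]; exact hwx₀
      have hpiece := my_agmon_piece (x₀ - L) x₀ w hdw cw cw' hc0 hwx₀ x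
        ⟨by linarith [hx.1, hx₀.2], h.le⟩
      calc w x ^ 2 ≤ ∫ t in (x₀ - L)..x₀, |w t * deriv w t| := hpiece
        _ = ∫ t in (x₀ - L)..((x₀ - L) + L), |w t * deriv w t| := by ring_nf
        _ = ∫ t in (0:ℝ)..(0 + L), |w t * deriv w t| :=
            hperabs.intervalIntegral_add_eq (x₀ - L) 0
        _ = ∫ t in (0:ℝ)..L, |w t * deriv w t| := by rw [zero_add]
  have hcs : (∫ t in (0:ℝ)..L, |w t * deriv w t|) ≤ R₀ * R₁ := by
    have h := my_cs 0 L hL.le (fun t => |w t|) (fun t => |deriv w t|) cw.abs cw'.abs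
    simp only [← abs_mul, sq_abs] at h
    calc (∫ t in (0:ℝ)..L, |w t * deriv w t|)
        ≤ Real.sqrt (∫ x in (0:ℝ)..L, w x ^ 2) * Real.sqrt (∫ x in (0:ℝ)..L, (deriv w x) ^ 2) := h
      _ ≤ R₀ * R₁ := mul_le_mul hR0 hR1 (Real.sqrt_nonneg _) hR0n
  have keyRR : ∀ x ∈ Set.Icc (0:ℝ) L, w x ^ 2 ≤ R₀ * R₁ :=
    fun x hx => (key x hx).trans hcs
  -- bound ∫ w⁴
  have hw2int : (∫ x in (0:ℝ)..L, w x ^ 2) ≤ R₀ ^ 2 := by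
    have hnn : 0 ≤ ∫ x in (0:ℝ)..L, w x ^ 2 :=
      intervalIntegral.integral_nonneg hL.le (fun x _ => sq_nonneg _)
    nlinarith [Real.sq_sqrt hnn, Real.sqrt_nonneg (∫ x in (0:ℝ)..L, w x ^ 2)]
  have hw4 : (∫ x in (0:ℝ)..L, w x ^ 4) ≤ R₀ ^ 3 * R₁ := by
    have hmono : (∫ x in (0:ℝ)..L, w x ^ 4) ≤ ∫ x in (0:ℝ)..L, (R₀ * R₁) * w x ^ 2 := by
      apply intervalIntegral.integral_mono_on hL.le ((cw.pow 4).intervalIntegrable 0 L)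
        ((continuous_const.mul (cw.pow 2)).intervalIntegrable 0 L)
      intro x hx
      have := keyRR x hx
      simp only [Pi.mul_apply, Pi.pow_apply]
      nlinarith [sq_nonneg (w x)]
    rw [intervalIntegral.integral_const_mul] at hmono
    calc (∫ x in (0:ℝ)..L, w x ^ 4) ≤ R₀ * R₁ * ∫ x in (0:ℝ)..L, w x ^ 2 := hmono
      _ ≤ R₀ * R₁ * R₀ ^ 2 := mul_le_mul_of_nonneg_left hw2int (mul_nonneg hR0n hR1n)
      _ = R₀ ^ 3 * R₁ := by ring
  -- integration by parts:  ∫ w² w'' = - ∫ 2 w (w')²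
  have hu : ∀ x ∈ Set.uIcc (0:ℝ) L, HasDerivAt (fun t => w t ^ 2) (2 * w x * deriv w x) x := by
    intro x _
    have h : HasDerivAt (fun t => w t ^ 2) _ x := (hdw x).pow 2
    convert h using 1
    push_cast
    ring
  have hv : ∀ x ∈ Set.uIcc (0:ℝ) L, HasDerivAt (deriv w) (deriv (deriv w) x) x :=
    fun x _ => hdw' x
  have hibp := intervalIntegral.integral_mul_deriv_eq_deriv_mul hu hv
    (((continuous_const.mul cw).mul cw').intervalIntegrable 0 L)
    (cw''.intervalIntegrable 0 L)
  have ewL : w L = w 0 := by simpa using hper 0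
  have ewL' : deriv w L = deriv w 0 := by simpa using hdper 0
  rw [ewL, ewL'] at hibp
  -- hibp : ∫ w² w'' = w0² w'0 - w0² w'0 - ∫ (2 w w') w'
  have hibp2 : (∫ x in (0:ℝ)..L, w x ^ 2 * deriv (deriv w) x)
      = - (2 * ∫ x in (0:ℝ)..L, w x * deriv w x ^ 2) := by
    rw [hibp, ← intervalIntegral.integral_const_mul]
    have e : ∀ x : ℝ, 2 * w x * deriv w x * deriv w x = 2 * (w x * deriv w x ^ 2) := by
      intro x; ring
    simp_rw [e]
    ring
  -- pointwise Young-type inequality and integration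
  have hyoung : (∫ x in (0:ℝ)..L, -(3/2) * (w x ^ 2 * deriv (deriv w) x))
      ≤ ∫ x in (0:ℝ)..L, ((4/5) * deriv (deriv w) x ^ 2 + (45/64) * w x ^ 4) := by
    apply intervalIntegral.integral_mono_on hL.le
      ((continuous_const.mul ((cw.pow 2).mul cw'')).intervalIntegrable 0 L)
      (((continuous_const.mul (cw''.pow 2)).add
        (continuous_const.mul (cw.pow 4))).intervalIntegrable 0 L)
    intro x _
    simp only [Pi.mul_apply, Pi.pow_apply, Pi.add_apply]
    nlinarith [sq_nonneg (deriv (deriv w) x + (15/16) * w x ^ 2)]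
  rw [intervalIntegral.integral_const_mul, hibp2,
    intervalIntegral.integral_add (f := fun x => 4/5 * deriv (deriv w) x ^ 2) (g := fun x => 45/64 * w x ^ 4) ((continuous_const.mul (cw''.pow 2)).intervalIntegrable 0 L)
      ((continuous_const.mul (cw.pow 4)).intervalIntegrable 0 L),
    intervalIntegral.integral_const_mul, intervalIntegral.integral_const_mul] at hyoung
  -- hyoung : -(3/2) * (-(2 * ∫ w w'²)) ≤ (4/5) ∫ w''² + (45/64) ∫ w⁴
  -- split the RHS integral
  have hsplit : (∫ x in (0:ℝ)..L,
        ((9/5) * deriv (deriv w) x ^ 2 - 3 * w x * (deriv w x) ^ 2 + (w x) ^ 4 / 4))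
      = (9/5) * (∫ x in (0:ℝ)..L, deriv (deriv w) x ^ 2)
        - 3 * (∫ x in (0:ℝ)..L, w x * deriv w x ^ 2)
        + (∫ x in (0:ℝ)..L, w x ^ 4) / 4 := by
    have e : ∀ x : ℝ, (9/5) * deriv (deriv w) x ^ 2 - 3 * w x * (deriv w x) ^ 2 + (w x) ^ 4 / 4
        = (9/5) * deriv (deriv w) x ^ 2 - 3 * (w x * deriv w x ^ 2) + (1/4) * w x ^ 4 := by
      intro x; ring
    simp_rw [e]
    rw [intervalIntegral.integral_add, intervalIntegral.integral_sub,
      intervalIntegral.integral_const_mul, intervalIntegral.integral_const_mul,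
      intervalIntegral.integral_const_mul]
    · ring
    · exact (continuous_const.mul (cw''.pow 2)).intervalIntegrable 0 L
    · exact (continuous_const.mul (cw.mul (cw'.pow 2))).intervalIntegrable 0 L
    · exact ((continuous_const.mul (cw''.pow 2)).sub
        (continuous_const.mul (cw.mul (cw'.pow 2)))).intervalIntegrable 0 L
    · exact (continuous_const.mul (cw.pow 4)).intervalIntegrable 0 L
  rw [hsplit]
  have hQ : 0 ≤ ∫ x in (0:ℝ)..L, w x ^ 4 :=
    intervalIntegral.integral_nonneg hL.le (fun x _ => by positivity)
  nlinarith [hyoung, hw4, hQ]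
end

section
/- Interpolation-based nonlinear estimate: for any L-periodic mean-zero w ∈ H⁶, ∫ w w_x ∂_x⁸ w dx ≤ c |w|_{L²}^{17/12} |∂_x⁶ w|_{L²}^{19/12} for a universal constant c. -/
open Real intervalIntegral MeasureTheory ENNReal

/-- Cauchy-Schwarz for interval integrals of continuous functions. -/
lemma cs_interval {L : ℝ} (hL : 0 ≤ L) {f g : ℝ → ℝ} (hf : Continuous f) (hg : Continuous g) :
    ∫ x in (0:ℝ)..L, f x * g x ≤
      Real.sqrt (∫ x in (0:ℝ)..L, f x ^ 2) * Real.sqrt (∫ x in (0:ℝ)..L, g x ^ 2) := by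
  set A := ∫ x in (0:ℝ)..L, f x ^ 2 with hA
  set B := ∫ x in (0:ℝ)..L, f x * g x with hB
  set C := ∫ x in (0:ℝ)..L, g x ^ 2 with hC
  have hAnn : 0 ≤ A := intervalIntegral.integral_nonneg hL (fun u _ => sq_nonneg _)
  have hCnn : 0 ≤ C := intervalIntegral.integral_nonneg hL (fun u _ => sq_nonneg _)
  have hq : ∀ t : ℝ, 0 ≤ C * (t * t) + (2 * B) * t + A := by
    intro t
    have h0 : 0 ≤ ∫ x in (0:ℝ)..L, (t * g x + f x) ^ 2 :=
      intervalIntegral.integral_nonneg hL (fun u _ => sq_nonneg _)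
    have hexp : (∫ x in (0:ℝ)..L, (t * g x + f x) ^ 2)
        = C * (t * t) + (2 * B) * t + A := by
      have h1 : ∀ x : ℝ, (t * g x + f x) ^ 2
          = (t * t) * g x ^ 2 + (2 * t) * (f x * g x) + f x ^ 2 := by intro x; ring
      rw [intervalIntegral.integral_congr (g := fun x => (t*t) * g x ^ 2 + (2*t) * (f x * g x) + f x ^ 2) (fun x _ => h1 x)]
      rw [intervalIntegral.integral_add (f := fun x => (t*t) * g x ^ 2 + (2*t) * (f x * g x)) (g := fun x => f x ^ 2) (((continuous_const.mul (hg.pow 2)).add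
            (continuous_const.mul (hf.mul hg))).intervalIntegrable _ _)
          ((hf.pow 2).intervalIntegrable _ _),
        intervalIntegral.integral_add (f := fun x => (t*t) * g x ^ 2) (g := fun x => (2*t) * (f x * g x)) ((continuous_const.mul (hg.pow 2)).intervalIntegrable _ _)
          ((continuous_const.mul (hf.mul hg)).intervalIntegrable _ _),
        intervalIntegral.integral_const_mul, intervalIntegral.integral_const_mul]
      ring
    linarith [hexp ▸ h0]
  have hd := discrim_le_zero hq
  rw [discrim] at hd
  have hB2 : B ^ 2 ≤ A * C := by nlinarith
  calc B ≤ |B| := le_abs_self _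
    _ = Real.sqrt (B ^ 2) := (Real.sqrt_sq_eq_abs B).symm
    _ ≤ Real.sqrt (A * C) := Real.sqrt_le_sqrt hB2
    _ = Real.sqrt A * Real.sqrt C := Real.sqrt_mul hAnn _

/-- Agmon-type estimate for mean-zero functions on [0,L]. -/
lemma agmon {L : ℝ} (hL : 0 < L) {f f' : ℝ → ℝ} (hf : ∀ x, HasDerivAt f (f' x) x)
    (hf' : Continuous f') (hmean : ∫ x in (0:ℝ)..L, f x = 0) {x : ℝ} (hx : x ∈ Set.Icc (0:ℝ) L) :
    f x ^ 2 ≤ 2 * Real.sqrt (∫ t in (0:ℝ)..L, f t ^ 2) * Real.sqrt (∫ t in (0:ℝ)..L, f' t ^ 2) := by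
  have hfc : Continuous f := by
    rw [continuous_iff_continuousAt]; exact fun y => (hf y).continuousAt
  -- find a zero of f via Rolle applied to F u = ∫_0^u f
  obtain ⟨x₀, hx₀mem, hx₀⟩ : ∃ x₀ ∈ Set.Ioo (0:ℝ) L, f x₀ = 0 := by
    have hFd : ∀ u ∈ Set.Ioo (0:ℝ) L, HasDerivAt (fun v => ∫ t in (0:ℝ)..v, f t) (f u) u := by
      intro u _
      exact intervalIntegral.integral_hasDerivAt_right (hfc.intervalIntegrable _ _)
        (hfc.stronglyMeasurableAtFilter _ _) hfc.continuousAt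
    have hFc : ContinuousOn (fun v => ∫ t in (0:ℝ)..v, f t) (Set.Icc 0 L) := by
      have : Continuous (fun v => ∫ t in (0:ℝ)..v, f t) :=
        intervalIntegral.continuous_primitive (fun a b => hfc.intervalIntegrable _ _) 0
      exact this.continuousOn
    have hFI : (fun v => ∫ t in (0:ℝ)..v, f t) 0 = (fun v => ∫ t in (0:ℝ)..v, f t) L := by
      simp [hmean]
    exact exists_hasDerivAt_eq_zero hL hFc hFI hFd
  -- f x ^ 2 = ∫_{x₀}^x (f^2)'
  have hsq : ∀ t : ℝ, HasDerivAt (fun s => f s ^ 2) (2 * f t * f' t) t := by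
    intro t
    have := ((hf t).mul (hf t))
    have h2 : HasDerivAt (fun s => f s * f s) (f' t * f t + f t * f' t) t := this
    convert h2 using 1
    · funext s; ring
    · ring
  have heq : f x ^ 2 = ∫ t in x₀..x, 2 * f t * f' t := by
    have := intervalIntegral.integral_eq_sub_of_hasDerivAt (f := fun s => f s ^ 2)
      (f' := fun t => 2 * f t * f' t) (a := x₀) (b := x) (fun t _ => hsq t)
      (((continuous_const.mul hfc).mul hf').intervalIntegrable _ _)
    rw [this]; simp [hx₀]
  set h : ℝ → ℝ := fun t => 2 * (|f t| * |f' t|) with hh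
  have hhc : Continuous h := continuous_const.mul (hfc.abs.mul hf'.abs)
  have hstep : f x ^ 2 ≤ ∫ t in (0:ℝ)..L, h t := by
    rw [heq]
    calc ∫ t in x₀..x, 2 * f t * f' t ≤ |∫ t in x₀..x, 2 * f t * f' t| := le_abs_self _
      _ ≤ |∫ t in x₀..x, h t| := by
          have := intervalIntegral.norm_integral_le_abs_integral_norm
            (f := fun t => 2 * f t * f' t) (a := x₀) (b := x) (μ := volume)
          simp only [Real.norm_eq_abs] at this
          refine le_trans this ?_
          have : (fun t => |2 * f t * f' t|) = h := by
            funext t; rw [hh]; simp [abs_mul, mul_assoc]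
          rw [this]
      _ ≤ |∫ t in (0:ℝ)..L, h t| := by
          apply intervalIntegral.abs_integral_mono_interval
          · have h1 : Set.uIoc x₀ x ⊆ Set.Ioc 0 L := by
              rw [Set.uIoc]
              apply Set.Ioc_subset_Ioc
              · exact le_min hx₀mem.1.le hx.1
              · exact max_le hx₀mem.2.le hx.2
            rwa [Set.uIoc_of_le hL.le]
          · filter_upwards with t
            exact mul_nonneg (by norm_num) (mul_nonneg (abs_nonneg _) (abs_nonneg _))
          · exact hhc.intervalIntegrable _ _
      _ = ∫ t in (0:ℝ)..L, h t := abs_of_nonneg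
          (intervalIntegral.integral_nonneg hL.le (fun t _ =>
            mul_nonneg (by norm_num) (mul_nonneg (abs_nonneg _) (abs_nonneg _))))
  have hcs : ∫ t in (0:ℝ)..L, |f t| * |f' t| ≤
      Real.sqrt (∫ t in (0:ℝ)..L, f t ^ 2) * Real.sqrt (∫ t in (0:ℝ)..L, f' t ^ 2) := by
    have := cs_interval hL.le hfc.abs hf'.abs
    simpa [sq_abs] using this
  have hsplit : (∫ t in (0:ℝ)..L, h t) = 2 * ∫ t in (0:ℝ)..L, |f t| * |f' t| := by
    rw [hh]; exact intervalIntegral.integral_const_mul _ _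
  rw [hsplit] at hstep
  nlinarith [hstep, hcs]

theorem stmt19 :
    ∃ c : ℝ, 0 < c ∧ ∀ (L : ℝ) (w : ℝ → ℝ), 0 < L → ContDiff ℝ 8 w →
      Function.Periodic w L → (∫ x in (0:ℝ)..L, w x = 0) →
      ∫ x in (0:ℝ)..L, w x * deriv w x * deriv^[8] w x
        ≤ c * (∫ x in (0:ℝ)..L, (w x) ^ 2) ^ ((17:ℝ)/24)
            * (∫ x in (0:ℝ)..L, (deriv^[6] w x) ^ 2) ^ ((19:ℝ)/24) := by
  refine ⟨4 * Real.sqrt 2, by positivity, ?_⟩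
  intro L w hL hw hper hmean
  set D : ℕ → ℝ → ℝ := fun k => deriv^[k] w with hD
  have hcd : ∀ k : ℕ, k ≤ 8 → ContDiff ℝ ((8 - k : ℕ) : ℕ) (D k) := by
    intro k hk
    apply ContDiff.iterate_deriv' (8 - k) k
    have : ((8 - k + k : ℕ) : WithTop ℕ∞) = (8 : WithTop ℕ∞) := by
      rw [Nat.sub_add_cancel hk]; norm_cast
    rw [this]; exact hw
  have hcont : ∀ k : ℕ, k ≤ 8 → Continuous (D k) := fun k hk => (hcd k hk).continuous
  have hder : ∀ k : ℕ, k < 8 → ∀ x, HasDerivAt (D k) (D (k+1) x) x := by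
    intro k hk x
    have h1 : Differentiable ℝ (D k) := by
      apply (hcd k hk.le).differentiable
      have : 8 - k ≠ 0 := by omega
      exact_mod_cast this
    have h2 : D (k+1) x = deriv (D k) x := by
      rw [hD]; simp only [Function.iterate_succ_apply']
    rw [h2]
    exact (h1 x).hasDerivAt
  have hperD : ∀ k : ℕ, Function.Periodic (D k) L := by
    intro k
    induction k with
    | zero => exact hper
    | succ n ih =>
      intro x
      have h2 : ∀ y, D (n+1) y = deriv (D n) y := by
        intro y; rw [hD]; simp only [Function.iterate_succ_apply']
      rw [h2, h2]
      calc deriv (D n) (x + L) = deriv (fun y => D n (y + L)) x := (deriv_comp_add_const _ _ _).symm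
        _ = deriv (D n) x := by
            congr 1; funext y; exact ih y
  have hzero : ∀ k : ℕ, k < 8 → ∫ x in (0:ℝ)..L, D (k+1) x = 0 := by
    intro k hk
    rw [intervalIntegral.integral_eq_sub_of_hasDerivAt (fun x _ => hder k hk x)
      ((hcont (k+1) (by omega)).intervalIntegrable _ _)]
    have := hperD k 0
    rw [zero_add] at this
    rw [this, sub_self]
  -- integration by parts
  have ibp : ∀ (u v u' v' : ℝ → ℝ), (∀ x, HasDerivAt u (u' x) x) → (∀ x, HasDerivAt v (v' x) x) →
      Continuous u' → Continuous v' → Function.Periodic u L → Function.Periodic v L →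
      ∫ x in (0:ℝ)..L, u x * v' x = -∫ x in (0:ℝ)..L, u' x * v x := by
    intro u v u' v' hu hv hu' hv' hpu hpv
    have huc : Continuous u := by
      rw [continuous_iff_continuousAt]; exact fun y => (hu y).continuousAt
    have hvc : Continuous v := by
      rw [continuous_iff_continuousAt]; exact fun y => (hv y).continuousAt
    have h := intervalIntegral.integral_deriv_mul_eq_sub (u := u) (v := v) (u' := u') (v' := v') (a := (0:ℝ)) (b := L)
      (fun x _ => hu x) (fun x _ => hv x)
      (hu'.intervalIntegrable _ _) (hv'.intervalIntegrable _ _)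
    rw [intervalIntegral.integral_add (f := fun x => u' x * v x) (g := fun x => u x * v' x) ((hu'.mul hvc).intervalIntegrable _ _)
      ((huc.mul hv').intervalIntegrable _ _)] at h
    have hb : u L * v L = u 0 * v 0 := by
      have h1 := hpu 0; have h2 := hpv 0
      rw [zero_add] at h1 h2
      rw [h1, h2]
    rw [hb] at h
    linarith
  have hD0 : D 0 = w := by funext x; simp [hD]
  -- two integrations by parts
  have e1 : (∫ x in (0:ℝ)..L, D 0 x * D 1 x * D 8 x)
      = -∫ x in (0:ℝ)..L, (D 1 x * D 1 x + D 0 x * D 2 x) * D 7 x := by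
    have h := ibp (fun y => D 0 y * D 1 y) (D 7)
      (fun x => D 1 x * D 1 x + D 0 x * D 2 x) (D 8)
      (fun x => (hder 0 (by omega) x).mul (hder 1 (by omega) x))
      (fun x => hder 7 (by omega) x)
      (((hcont 1 (by omega)).mul (hcont 1 (by omega))).add
        ((hcont 0 (by omega)).mul (hcont 2 (by omega))))
      (hcont 8 (by omega)) ((hperD 0).mul (hperD 1)) (hperD 7)
    convert h using 2
  have e2 : (∫ x in (0:ℝ)..L, (D 1 x * D 1 x + D 0 x * D 2 x) * D 7 x)
      = -∫ x in (0:ℝ)..L, ((D 2 x * D 1 x + D 1 x * D 2 x) + (D 1 x * D 2 x + D 0 x * D 3 x)) * D 6 x := by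
    exact ibp (fun y => D 1 y * D 1 y + D 0 y * D 2 y) (D 6)
      (fun x => (D 2 x * D 1 x + D 1 x * D 2 x) + (D 1 x * D 2 x + D 0 x * D 3 x)) (D 7)
      (fun x => ((hder 1 (by omega) x).mul (hder 1 (by omega) x)).add
        ((hder 0 (by omega) x).mul (hder 2 (by omega) x)))
      (fun x => hder 6 (by omega) x)
      ((((hcont 2 (by omega)).mul (hcont 1 (by omega))).add
        ((hcont 1 (by omega)).mul (hcont 2 (by omega)))).add
        (((hcont 1 (by omega)).mul (hcont 2 (by omega))).add
        ((hcont 0 (by omega)).mul (hcont 3 (by omega)))))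
      (hcont 7 (by omega))
      (((hperD 1).mul (hperD 1)).add ((hperD 0).mul (hperD 2))) (hperD 6)
  have emain : (∫ x in (0:ℝ)..L, D 0 x * D 1 x * D 8 x)
      = ∫ x in (0:ℝ)..L, ((D 2 x * D 1 x + D 1 x * D 2 x) + (D 1 x * D 2 x + D 0 x * D 3 x)) * D 6 x := by
    rw [e1, e2, neg_neg]
  -- positivity criterion
  have hposof : ∀ k : ℕ, k ≤ 8 → (∃ y ∈ Set.Ioo (0:ℝ) L, D k y ≠ 0) →
      0 < ∫ x in (0:ℝ)..L, (D k x) ^ 2 := by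
    intro k hk ⟨y, hy, hyne⟩
    rw [intervalIntegral.integral_pos_iff_support_of_nonneg_ae
      (Filter.Eventually.of_forall (fun t => sq_nonneg _))
      (((hcont k hk).pow 2).intervalIntegrable _ _)]
    refine ⟨hL, ?_⟩
    have hopen : IsOpen ({x | D k x ≠ 0} ∩ Set.Ioo 0 L) :=
      (isOpen_ne.preimage (hcont k hk)).inter isOpen_Ioo
    have hsub : {x | D k x ≠ 0} ∩ Set.Ioo 0 L ⊆ Function.support (fun x => (D k x)^2) ∩ Set.Ioc 0 L := by
      rintro t ⟨ht1, ht2⟩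
      exact ⟨pow_ne_zero _ ht1, Set.Ioo_subset_Ioc_self ht2⟩
    calc (0:ℝ≥0∞) < volume ({x | D k x ≠ 0} ∩ Set.Ioo 0 L) :=
          hopen.measure_pos volume ⟨y, hyne, hy⟩
      _ ≤ _ := measure_mono hsub
  -- degenerate / nondegenerate split
  by_cases hzw : ∀ x ∈ Set.Icc (0:ℝ) L, w x = 0
  · have hlhs : (∫ x in (0:ℝ)..L, w x * deriv w x * deriv^[8] w x) = 0 := by
      rw [intervalIntegral.integral_congr (g := fun _ => (0:ℝ))]
      · simp
      · intro x hx
        rw [Set.uIcc_of_le hL.le] at hx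
        simp [hzw x hx]
    rw [hlhs]
    have h1 : (0:ℝ) ≤ ∫ x in (0:ℝ)..L, (w x) ^ 2 :=
      intervalIntegral.integral_nonneg hL.le (fun u _ => sq_nonneg _)
    have h2 : (0:ℝ) ≤ ∫ x in (0:ℝ)..L, (deriv^[6] w x) ^ 2 :=
      intervalIntegral.integral_nonneg hL.le (fun u _ => sq_nonneg _)
    have : (0:ℝ) < 4 * Real.sqrt 2 := by positivity
    exact mul_nonneg (mul_nonneg this.le (Real.rpow_nonneg h1 _)) (Real.rpow_nonneg h2 _)
  · push_neg at hzw
    -- a point in the open interval where w is nonzero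
    have hy0 : ∃ y ∈ Set.Ioo (0:ℝ) L, w y ≠ 0 := by
      by_contra h
      push_neg at h
      obtain ⟨x, hx, hxne⟩ := hzw
      apply hxne
      have hsub : Set.Icc (0:ℝ) L ⊆ {t | w t = 0} := by
        rw [← closure_Ioo hL.ne]
        apply closure_minimal
        · intro t ht; exact h t ht
        · exact isClosed_eq (hD0 ▸ hcont 0 (by omega)) continuous_const
      exact hsub hx
    -- all derivatives up to order 6 are somewhere nonzero
    have hnz : ∀ k : ℕ, k ≤ 6 → ∃ y ∈ Set.Ioo (0:ℝ) L, D k y ≠ 0 := by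
      intro k
      induction k with
      | zero =>
        intro _
        obtain ⟨y, hy, hyne⟩ := hy0
        exact ⟨y, hy, by rwa [hD0]⟩
      | succ n ih =>
        intro hk
        obtain ⟨y, hy, hyne⟩ := ih (by omega)
        by_contra h
        push_neg at h
        have hIcc : ∀ t ∈ Set.Icc (0:ℝ) L, D (n+1) t = 0 := by
          have hsub : Set.Icc (0:ℝ) L ⊆ {t | D (n+1) t = 0} := by
            rw [← closure_Ioo hL.ne]
            exact closure_minimal (fun t ht => h t ht)
              (isClosed_eq (hcont (n+1) (by omega)) continuous_const)
          exact fun t ht => hsub ht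
        have hconst : ∀ t ∈ Set.Icc (0:ℝ) L, D n t = D n 0 := by
          intro t ht
          have hftc := intervalIntegral.integral_eq_sub_of_hasDerivAt
            (f := D n) (f' := D (n+1)) (a := (0:ℝ)) (b := t)
            (fun s _ => hder n (by omega) s)
            ((hcont (n+1) (by omega)).intervalIntegrable _ _)
          have hz : (∫ s in (0:ℝ)..t, D (n+1) s) = 0 := by
            rw [intervalIntegral.integral_congr (g := fun _ => (0:ℝ))]
            · simp
            · intro s hs
              apply hIcc
              have : Set.uIcc (0:ℝ) t = Set.Icc 0 t := Set.uIcc_of_le ht.1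
              rw [this] at hs
              exact ⟨hs.1, le_trans hs.2 ht.2⟩
          rw [hz] at hftc
          linarith
        have hmn : (∫ x in (0:ℝ)..L, D n x) = 0 := by
          match n with
          | 0 => rw [hD0]; exact hmean
          | m+1 => exact hzero m (by omega)
        have hc0 : D n 0 * L = 0 := by
          have : (∫ x in (0:ℝ)..L, D n x) = D n 0 * L := by
            rw [intervalIntegral.integral_congr (g := fun _ => D n 0)
              (fun t ht => hconst t (by rwa [Set.uIcc_of_le hL.le] at ht))]
            simp [mul_comm]
          rw [← this, hmn]
        have : D n 0 = 0 := by
          rcases mul_eq_zero.mp hc0 with h' | h'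
          · exact h'
          · exact absurd h' hL.ne'
        exact hyne (by rw [hconst y (Set.Ioo_subset_Icc_self hy), this])
    set I : ℕ → ℝ := fun k => ∫ x in (0:ℝ)..L, (D k x)^2 with hI
    have hIpos : ∀ k : ℕ, k ≤ 6 → 0 < I k := fun k hk =>
      hposof k (by omega) (hnz k hk)
    set a : ℕ → ℝ := fun k => Real.sqrt (I k) with ha
    set b : ℕ → ℝ := fun k => Real.log (a k) with hb
    have hapos : ∀ k : ℕ, k ≤ 6 → 0 < a k := fun k hk => Real.sqrt_pos.mpr (hIpos k hk)
    have haexp : ∀ k : ℕ, k ≤ 6 → a k = Real.exp (b k) := fun k hk =>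
      (Real.exp_log (hapos k hk)).symm
    have hIa : ∀ k : ℕ, k ≤ 6 → I k = a k ^ 2 := fun k hk =>
      (Real.sq_sqrt (hIpos k hk).le).symm
    -- log-convexity
    have hconv : ∀ k : ℕ, k ≤ 4 → a (k+1) ^ 2 ≤ a k * a (k+2) := by
      intro k hk
      have h1 : a (k+1) ^ 2 = I (k+1) := (hIa (k+1) (by omega)).symm
      have h2 : I (k+1) = ∫ x in (0:ℝ)..L, D (k+1) x * D (k+1) x := by
        rw [hI]
        exact intervalIntegral.integral_congr (fun x _ => pow_two (D (k+1) x))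
      have h3 : (∫ x in (0:ℝ)..L, D k x * D (k+2) x)
          = -∫ x in (0:ℝ)..L, D (k+1) x * D (k+1) x := by
        exact ibp (D k) (D (k+1)) (D (k+1)) (D (k+2))
          (fun x => hder k (by omega) x) (fun x => hder (k+1) (by omega) x)
          (hcont (k+1) (by omega)) (hcont (k+2) (by omega)) (hperD k) (hperD (k+1))
      have h4 : (∫ x in (0:ℝ)..L, D (k+1) x * D (k+1) x)
          = ∫ x in (0:ℝ)..L, (-(D k x)) * D (k+2) x := by
        have : (∫ x in (0:ℝ)..L, (-(D k x)) * D (k+2) x)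
            = -∫ x in (0:ℝ)..L, D k x * D (k+2) x := by
          rw [← intervalIntegral.integral_neg]
          exact intervalIntegral.integral_congr (fun x _ => by ring)
        rw [this, h3, neg_neg]
      have h5 := cs_interval hL.le (f := fun x => -(D k x)) (g := D (k+2))
        (hcont k (by omega)).neg (hcont (k+2) (by omega))
      have h6 : (∫ x in (0:ℝ)..L, (-(D k x)) ^ 2) = I k := by
        rw [hI]
        exact intervalIntegral.integral_congr (fun x _ => by ring)
      rw [h6] at h5
      rw [h1, h2, h4]
      calc (∫ x in (0:ℝ)..L, (-(D k x)) * D (k+2) x)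
          ≤ Real.sqrt (I k) * Real.sqrt (∫ x in (0:ℝ)..L, (D (k+2) x)^2) := h5
        _ = a k * a (k+2) := by rw [ha]
    -- logarithmic convexity
    have hlog : ∀ k : ℕ, k ≤ 4 → 2 * b (k+1) ≤ b k + b (k+2) := by
      intro k hk
      have h := hconv k hk
      have hlt : (0:ℝ) < a (k+1) ^ 2 := pow_pos (hapos (k+1) (by omega)) 2
      have h2 := Real.log_le_log hlt h
      rw [Real.log_pow, Real.log_mul (hapos k (by omega)).ne' (hapos (k+2) (by omega)).ne'] at h2
      simp only [hb]
      push_cast at h2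
      linarith
    have hb1 : 6 * b 1 ≤ 5 * b 0 + b 6 := by
      linarith [hlog 0 (by omega), hlog 1 (by omega), hlog 2 (by omega),
        hlog 3 (by omega), hlog 4 (by omega)]
    have hb2 : 6 * b 2 ≤ 4 * b 0 + 2 * b 6 := by
      linarith [hlog 0 (by omega), hlog 1 (by omega), hlog 2 (by omega),
        hlog 3 (by omega), hlog 4 (by omega)]
    have hb3 : 6 * b 3 ≤ 3 * b 0 + 3 * b 6 := by
      linarith [hlog 0 (by omega), hlog 1 (by omega), hlog 2 (by omega),
        hlog 3 (by omega), hlog 4 (by omega)]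
    -- Agmon bounds
    have hag0 : ∀ x ∈ Set.Icc (0:ℝ) L, w x ^ 2 ≤ 2 * a 0 * a 1 := by
      intro x hx
      have hf : ∀ t, HasDerivAt w (D 1 t) t := fun t => hD0 ▸ hder 0 (by omega) t
      have h := agmon hL hf (hcont 1 (by omega)) hmean hx
      exact h
    have hag1 : ∀ x ∈ Set.Icc (0:ℝ) L, D 1 x ^ 2 ≤ 2 * a 1 * a 2 := by
      intro x hx
      have h := agmon hL (fun t => hder 1 (by omega) t) (hcont 2 (by omega))
        (hzero 0 (by omega)) hx
      exact h
    set M0 : ℝ := Real.sqrt (2 * a 0 * a 1) with hM0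
    set M1 : ℝ := Real.sqrt (2 * a 1 * a 2) with hM1
    have habs0 : ∀ x ∈ Set.Icc (0:ℝ) L, |D 0 x| ≤ M0 := by
      intro x hx
      rw [← Real.sqrt_sq_eq_abs, hM0]
      exact Real.sqrt_le_sqrt (by rw [hD0]; exact hag0 x hx)
    have habs1 : ∀ x ∈ Set.Icc (0:ℝ) L, |D 1 x| ≤ M1 := by
      intro x hx
      rw [← Real.sqrt_sq_eq_abs, hM1]
      exact Real.sqrt_le_sqrt (hag1 x hx)
    -- pointwise bound and integral comparison
    have hptw : ∀ x ∈ Set.Icc (0:ℝ) L,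
        ((D 2 x * D 1 x + D 1 x * D 2 x) + (D 1 x * D 2 x + D 0 x * D 3 x)) * D 6 x
          ≤ 3 * M1 * (|D 2 x| * |D 6 x|) + M0 * (|D 3 x| * |D 6 x|) := by
      intro x hx
      have h1 : D 1 x * (D 2 x * D 6 x) ≤ M1 * (|D 2 x| * |D 6 x|) := by
        calc D 1 x * (D 2 x * D 6 x) ≤ |D 1 x * (D 2 x * D 6 x)| := le_abs_self _
          _ = |D 1 x| * (|D 2 x| * |D 6 x|) := by rw [abs_mul, abs_mul]
          _ ≤ M1 * (|D 2 x| * |D 6 x|) := mul_le_mul_of_nonneg_right (habs1 x hx)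
              (mul_nonneg (abs_nonneg _) (abs_nonneg _))
      have h0 : D 0 x * (D 3 x * D 6 x) ≤ M0 * (|D 3 x| * |D 6 x|) := by
        calc D 0 x * (D 3 x * D 6 x) ≤ |D 0 x * (D 3 x * D 6 x)| := le_abs_self _
          _ = |D 0 x| * (|D 3 x| * |D 6 x|) := by rw [abs_mul, abs_mul]
          _ ≤ M0 * (|D 3 x| * |D 6 x|) := mul_le_mul_of_nonneg_right (habs0 x hx)
              (mul_nonneg (abs_nonneg _) (abs_nonneg _))
      nlinarith [h1, h0]
    have hMnn0 : 0 ≤ M0 := Real.sqrt_nonneg _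
    have hMnn1 : 0 ≤ M1 := Real.sqrt_nonneg _
    have hintmono : (∫ x in (0:ℝ)..L,
          ((D 2 x * D 1 x + D 1 x * D 2 x) + (D 1 x * D 2 x + D 0 x * D 3 x)) * D 6 x)
        ≤ ∫ x in (0:ℝ)..L, (3 * M1 * (|D 2 x| * |D 6 x|) + M0 * (|D 3 x| * |D 6 x|)) := by
      apply intervalIntegral.integral_mono_on hL.le
      · apply Continuous.intervalIntegrable
        exact ((((hcont 2 (by omega)).mul (hcont 1 (by omega))).add
          ((hcont 1 (by omega)).mul (hcont 2 (by omega)))).add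
          (((hcont 1 (by omega)).mul (hcont 2 (by omega))).add
          ((hcont 0 (by omega)).mul (hcont 3 (by omega))))).mul (hcont 6 (by omega))
      · apply Continuous.intervalIntegrable
        exact (continuous_const.mul ((hcont 2 (by omega)).abs.mul (hcont 6 (by omega)).abs)).add
          (continuous_const.mul ((hcont 3 (by omega)).abs.mul (hcont 6 (by omega)).abs))
      · exact hptw
    have hsplit : (∫ x in (0:ℝ)..L, (3 * M1 * (|D 2 x| * |D 6 x|) + M0 * (|D 3 x| * |D 6 x|)))
        = 3 * M1 * (∫ x in (0:ℝ)..L, |D 2 x| * |D 6 x|)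
          + M0 * (∫ x in (0:ℝ)..L, |D 3 x| * |D 6 x|) := by
      rw [intervalIntegral.integral_add (f := fun x => 3 * M1 * (|D 2 x| * |D 6 x|)) (g := fun x => M0 * (|D 3 x| * |D 6 x|))
        ((continuous_const.mul ((hcont 2 (by omega)).abs.mul (hcont 6 (by omega)).abs)).intervalIntegrable _ _)
        ((continuous_const.mul ((hcont 3 (by omega)).abs.mul (hcont 6 (by omega)).abs)).intervalIntegrable _ _),
        intervalIntegral.integral_const_mul, intervalIntegral.integral_const_mul]
    have hcs2 : (∫ x in (0:ℝ)..L, |D 2 x| * |D 6 x|) ≤ a 2 * a 6 := by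
      have h := cs_interval hL.le (hcont 2 (by omega)).abs (hcont 6 (by omega)).abs
      simp only [sq_abs] at h
      exact h
    have hcs3 : (∫ x in (0:ℝ)..L, |D 3 x| * |D 6 x|) ≤ a 3 * a 6 := by
      have h := cs_interval hL.le (hcont 3 (by omega)).abs (hcont 6 (by omega)).abs
      simp only [sq_abs] at h
      exact h
    -- bound via exponentials
    have hsqrtexp : ∀ t : ℝ, Real.sqrt (Real.exp t) = Real.exp (t/2) := by
      intro t
      rw [show Real.exp t = (Real.exp (t/2))^2 by rw [sq, ← Real.exp_add, add_halves]]
      exact Real.sqrt_sq (Real.exp_nonneg _)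
    have hM1e : M1 = Real.sqrt 2 * Real.exp ((b 1 + b 2)/2) := by
      rw [hM1, haexp 1 (by omega), haexp 2 (by omega), mul_assoc, ← Real.exp_add,
        Real.sqrt_mul (by norm_num : (0:ℝ) ≤ 2), hsqrtexp]
    have hM0e : M0 = Real.sqrt 2 * Real.exp ((b 0 + b 1)/2) := by
      rw [hM0, haexp 0 (by omega), haexp 1 (by omega), mul_assoc, ← Real.exp_add,
        Real.sqrt_mul (by norm_num : (0:ℝ) ≤ 2), hsqrtexp]
    have hterm1 : 3 * M1 * (a 2 * a 6) = 3 * Real.sqrt 2 * Real.exp ((b 1 + b 2)/2 + (b 2 + b 6)) := by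
      rw [hM1e, haexp 2 (by omega), haexp 6 (by omega), Real.exp_add, ← Real.exp_add]
      ring
    have hterm2 : M0 * (a 3 * a 6) = Real.sqrt 2 * Real.exp ((b 0 + b 1)/2 + (b 3 + b 6)) := by
      rw [hM0e, haexp 3 (by omega), haexp 6 (by omega), Real.exp_add, ← Real.exp_add]
      ring
    have hs1 : (b 1 + b 2)/2 + (b 2 + b 6) ≤ (17/12) * b 0 + (19/12) * b 6 := by
      linarith [hb1, hb2]
    have hs2 : (b 0 + b 1)/2 + (b 3 + b 6) ≤ (17/12) * b 0 + (19/12) * b 6 := by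
      linarith [hb1, hb3]
    have hrpow0 : (I 0) ^ ((17:ℝ)/24) = Real.exp ((17/12) * b 0) := by
      rw [Real.rpow_def_of_pos (hIpos 0 (by omega))]
      congr 1
      have hl : Real.log (I 0) = 2 * b 0 := by
        rw [hIa 0 (by omega), Real.log_pow]
        simp only [hb]
        push_cast
        ring
      rw [hl]; ring
    have hrpow6 : (I 6) ^ ((19:ℝ)/24) = Real.exp ((19/12) * b 6) := by
      rw [Real.rpow_def_of_pos (hIpos 6 (by omega))]
      congr 1
      have hl : Real.log (I 6) = 2 * b 6 := by
        rw [hIa 6 (by omega), Real.log_pow]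
        simp only [hb]
        push_cast
        ring
      rw [hl]; ring
    -- assemble
    have hfinal : (∫ x in (0:ℝ)..L, D 0 x * D 1 x * D 8 x)
        ≤ 4 * Real.sqrt 2 * (I 0) ^ ((17:ℝ)/24) * (I 6) ^ ((19:ℝ)/24) := by
      rw [emain]
      have hstep1 : 3 * M1 * (∫ x in (0:ℝ)..L, |D 2 x| * |D 6 x|) ≤ 3 * M1 * (a 2 * a 6) :=
        mul_le_mul_of_nonneg_left hcs2 (by positivity)
      have hstep2 : M0 * (∫ x in (0:ℝ)..L, |D 3 x| * |D 6 x|) ≤ M0 * (a 3 * a 6) :=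
        mul_le_mul_of_nonneg_left hcs3 hMnn0
      have hexp1 : 3 * Real.sqrt 2 * Real.exp ((b 1 + b 2)/2 + (b 2 + b 6))
          ≤ 3 * Real.sqrt 2 * Real.exp ((17/12) * b 0 + (19/12) * b 6) :=
        mul_le_mul_of_nonneg_left (Real.exp_le_exp.mpr hs1) (by positivity)
      have hexp2 : Real.sqrt 2 * Real.exp ((b 0 + b 1)/2 + (b 3 + b 6))
          ≤ Real.sqrt 2 * Real.exp ((17/12) * b 0 + (19/12) * b 6) :=
        mul_le_mul_of_nonneg_left (Real.exp_le_exp.mpr hs2) (Real.sqrt_nonneg _)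
      have hrhs : 4 * Real.sqrt 2 * (I 0) ^ ((17:ℝ)/24) * (I 6) ^ ((19:ℝ)/24)
          = 4 * Real.sqrt 2 * Real.exp ((17/12) * b 0 + (19/12) * b 6) := by
        rw [hrpow0, hrpow6, Real.exp_add]; ring
      rw [hrhs]
      calc (∫ x in (0:ℝ)..L,
            ((D 2 x * D 1 x + D 1 x * D 2 x) + (D 1 x * D 2 x + D 0 x * D 3 x)) * D 6 x)
          ≤ 3 * M1 * (∫ x in (0:ℝ)..L, |D 2 x| * |D 6 x|)
            + M0 * (∫ x in (0:ℝ)..L, |D 3 x| * |D 6 x|) := by rw [← hsplit]; exact hintmono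
        _ ≤ 3 * M1 * (a 2 * a 6) + M0 * (a 3 * a 6) := add_le_add hstep1 hstep2
        _ = 3 * Real.sqrt 2 * Real.exp ((b 1 + b 2)/2 + (b 2 + b 6))
            + Real.sqrt 2 * Real.exp ((b 0 + b 1)/2 + (b 3 + b 6)) := by rw [hterm1, hterm2]
        _ ≤ 3 * Real.sqrt 2 * Real.exp ((17/12) * b 0 + (19/12) * b 6)
            + Real.sqrt 2 * Real.exp ((17/12) * b 0 + (19/12) * b 6) := add_le_add hexp1 hexp2
        _ = 4 * Real.sqrt 2 * Real.exp ((17/12) * b 0 + (19/12) * b 6) := by ring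
    exact hfinal
end
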